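/- Let i ≥ 2 and let b_1, …, b_i ∈ k, not all zero. Set s = b_1·y_1 + ⋯ + b_i·y_i in S_i. Then the annihilator ann_{S_i}(s) equals the ideal (y_1, …, y_i) generated by y_1, …, y_i. -/

import Mathlib

set_option synthInstance.maxHeartbeats 1000000
set_option maxHeartbeats 1000000

open MvPolynomial

noncomputable section

/-- The defining ideal `(X², (Y₁,…,Y_i)²)` of `S_i` in `k[X,Y₁,…,Y_i]`;
the variable `X 0` plays the role of `X` and `X j.succ` the role of `Y_j`. -/
abbrev SIdeal (k : Type) [Field k] (i : ℕ) : Ideal (MvPolynomial (Fin (i + 1)) k) :=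
  Ideal.span ({X 0 ^ 2} ∪ {p | ∃ a b : Fin i, p = X a.succ * X b.succ})

/-- `S_i = k[X,Y₁,…,Y_i]/(X², (Y₁,…,Y_i)²)`. -/
abbrev Sring (k : Type) [Field k] (i : ℕ) := MvPolynomial (Fin (i + 1)) k ⧸ SIdeal k i

/-- `x`, the residue class of `X` in `S_i`. -/
abbrev xS (k : Type) [Field k] (i : ℕ) : Sring k i := Ideal.Quotient.mk _ (X 0)

/-- `y_j`, the residue class of `Y_j` in `S_i`. -/
abbrev yS (k : Type) [Field k] (i : ℕ) (j : Fin i) : Sring k i :=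
  Ideal.Quotient.mk _ (X j.succ)

/-- The maximal ideal `𝔫_i = (x, y₁, …, y_i)` of `S_i`. -/
abbrev nS (k : Type) [Field k] (i : ℕ) : Ideal (Sring k i) :=
  Ideal.span ({xS k i} ∪ Set.range (yS k i))

/-- Coefficients of elements of `SIdeal` vanish at monomials of degree ≤ 1 in `X` and
degree ≤ 1 in the `Y`'s. -/
lemma coeff_eq_zero_of_mem_SIdeal (k : Type) [Field k] (i : ℕ)
    {q : MvPolynomial (Fin (i + 1)) k} (hq : q ∈ SIdeal k i) :
    ∀ m : Fin (i + 1) →₀ ℕ, m 0 ≤ 1 → (∑ j : Fin i, m j.succ) ≤ 1 → coeff m q = 0 := by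
  induction hq using Submodule.span_induction with
  | mem p hp =>
    intro m hm0 hm1
    rcases hp with hp | ⟨a, c, rfl⟩
    · rcases hp with rfl
      rw [X_pow_eq_monomial, coeff_monomial]
      split_ifs with h
      · subst h
        simp at hm0
      · rfl
    · have hX : ∀ n : Fin (i + 1), (X n : MvPolynomial (Fin (i + 1)) k)
          = monomial (Finsupp.single n 1) 1 := fun n => rfl
      rw [hX, hX, monomial_mul, coeff_monomial]
      split_ifs with h
      · subst h
        simp [Finsupp.add_apply, Finsupp.single_apply, Finset.sum_add_distrib,
          Fin.succ_inj] at hm1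
      · rfl
  | zero => intro m _ _; simp
  | add p q _ _ hp hq => intro m hm0 hm1; simp [hp m hm0 hm1, hq m hm0 hm1]
  | smul a p _ hp =>
    intro m hm0 hm1
    rw [smul_eq_mul, coeff_mul]
    apply Finset.sum_eq_zero
    rintro ⟨u, v⟩ huv
    rw [Finset.HasAntidiagonal.mem_antidiagonal] at huv
    have hv : v ≤ m := by rw [← huv]; exact le_add_self
    have hv0 : v 0 ≤ 1 := le_trans (hv 0) hm0
    have hv1 : (∑ j : Fin i, v j.succ) ≤ 1 :=
      le_trans (Finset.sum_le_sum fun j _ => hv j.succ) hm1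
    rw [hp v hv0 hv1, mul_zero]

theorem stmt3 (k : Type) [Field k] [CharZero k] (i : ℕ) (hi : 2 ≤ i)
    (b : Fin i → k) (hb : b ≠ 0) (s : Sring k i)
    (hs : s = ∑ j, algebraMap k (Sring k i) (b j) * yS k i j) :
    {r : Sring k i | r * s = 0} = ↑(Ideal.span (Set.range (yS k i))) := by
  obtain ⟨j0, hj0⟩ : ∃ j, b j ≠ 0 := by
    by_contra h
    push_neg at h
    exact hb (funext h)
  ext r
  simp only [Set.mem_setOf_eq, SetLike.mem_coe]
  constructor
  · intro hr
    obtain ⟨P, rfl⟩ := Ideal.Quotient.mk_surjective r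
    set L : MvPolynomial (Fin (i + 1)) k := ∑ l, C (b l) * X l.succ with hL
    have hsL : s = Ideal.Quotient.mk (SIdeal k i) L := by
      rw [hs, hL, map_sum]
      exact Finset.sum_congr rfl fun l _ => by rw [map_mul]; rfl
    have hPL : P * L ∈ SIdeal k i := by
      rw [← Ideal.Quotient.eq_zero_iff_mem, map_mul, ← hsL]
      exact hr
    have key : ∀ m : Fin (i + 1) →₀ ℕ, (∀ j : Fin i, m j.succ = 0) →
        coeff (m + Finsupp.single j0.succ 1) (P * L) = b j0 * coeff m P := by
      intro m hm
      rw [hL, Finset.mul_sum, coeff_sum]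
      rw [Finset.sum_eq_single j0]
      · rw [mul_left_comm, coeff_C_mul, coeff_mul_X']
        rw [if_pos, add_tsub_cancel_right]
        simp [Finsupp.mem_support_iff]
      · intro l _ hl
        rw [mul_left_comm, coeff_C_mul, coeff_mul_X', if_neg, mul_zero]
        simp only [Finsupp.mem_support_iff, Finsupp.add_apply, hm l,
          Finsupp.single_apply, zero_add, ne_eq, not_not]
        rw [if_neg]
        exact fun h => hl (Fin.succ_injective _ h.symm)
      · intro h
        exact absurd (Finset.mem_univ j0) h
    have h1 : b j0 * coeff 0 P = 0 := by
      rw [← key 0 (fun j => rfl), zero_add]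
      apply coeff_eq_zero_of_mem_SIdeal k i hPL
      · simp [Finsupp.single_apply, Fin.succ_ne_zero]
      · simp [Finsupp.single_apply, Fin.succ_inj]
    have h2 : b j0 * coeff (Finsupp.single 0 1) P = 0 := by
      rw [← key (Finsupp.single 0 1) (fun j => by
        simp [Finsupp.single_apply, (Fin.succ_ne_zero j).symm])]
      apply coeff_eq_zero_of_mem_SIdeal k i hPL
      · simp [Finsupp.add_apply, Finsupp.single_apply, Fin.succ_ne_zero]
      · simp [Finsupp.add_apply, Finsupp.single_apply, Fin.succ_inj,
          (Fin.succ_ne_zero · |>.symm)]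
    have hc0 : coeff 0 P = 0 := (mul_eq_zero.mp h1).resolve_left hj0
    have hc1 : coeff (Finsupp.single 0 1) P = 0 := (mul_eq_zero.mp h2).resolve_left hj0
    rw [← support_sum_monomial_coeff P, map_sum]
    apply Ideal.sum_mem
    intro v _
    by_cases hv0 : v = 0
    · rw [hv0, hc0, map_zero, map_zero]
      exact Ideal.zero_mem _
    by_cases hv1 : v = Finsupp.single 0 1
    · rw [hv1, hc1, map_zero, map_zero]
      exact Ideal.zero_mem _
    by_cases hY : ∃ j : Fin i, v j.succ ≠ 0
    · obtain ⟨j, hj⟩ := hY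
      have hle : Finsupp.single j.succ 1 ≤ v := by
        rw [Finsupp.single_le_iff]
        omega
      rw [show v = Finsupp.single j.succ 1 + (v - Finsupp.single j.succ 1) from
        (add_tsub_cancel_of_le hle).symm, monomial_single_add, pow_one, map_mul]
      exact Ideal.mul_mem_right _ _ (Ideal.subset_span ⟨j, rfl⟩)
    · push_neg at hY
      have hvs : v = Finsupp.single 0 (v 0) := by
        ext a
        refine Fin.cases ?_ (fun j => ?_) a
        · simp
        · simp [hY j, Finsupp.single_apply, (Fin.succ_ne_zero j).symm]
      have hv2 : 2 ≤ v 0 := by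
        rcases Nat.lt_or_ge (v 0) 2 with h | h
        · interval_cases h' : v 0
          · exact absurd (by rw [hvs]; simp) hv0
          · exact absurd hvs hv1
        · exact h
      have hle : Finsupp.single (0 : Fin (i + 1)) 2 ≤ v := by
        rw [Finsupp.single_le_iff]
        exact hv2
      have hx2 : (Ideal.Quotient.mk (SIdeal k i)) (X 0 ^ 2) = 0 :=
        Ideal.Quotient.eq_zero_iff_mem.mpr (Ideal.subset_span (Or.inl rfl))
      rw [show v = Finsupp.single (0 : Fin (i + 1)) 2 + (v - Finsupp.single 0 2) from
        (add_tsub_cancel_of_le hle).symm, monomial_single_add, map_mul, hx2, zero_mul]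
      exact Ideal.zero_mem _
  · intro hr
    induction hr using Submodule.span_induction with
    | mem r hrm =>
      obtain ⟨j, rfl⟩ := hrm
      rw [hs, Finset.mul_sum]
      apply Finset.sum_eq_zero
      intro l _
      have hyy : yS k i j * yS k i l = 0 := by
        rw [← map_mul, Ideal.Quotient.eq_zero_iff_mem]
        exact Ideal.subset_span (Or.inr ⟨j, l, rfl⟩)
      rw [mul_left_comm, hyy, mul_zero]
    | zero => rw [zero_mul]
    | add x y _ _ hx hy => rw [add_mul, hx, hy, add_zero]
    | smul a x _ hx => rw [smul_eq_mul, mul_assoc, hx, mul_zero]
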